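/- In the two-phase consensus algorithm, if node u has status decided(0) and node v has status bivalent, then v receives some message from u before v finishes its phase-2 broadcast. Consequently u ∈ W_v (v's witness set), v waits for u's phase-2 message, sees decided(0), and decides 0. -/

import Mathlib

/-- Two-phase consensus, witness argument: if `u` has status `decided(0)`
(`some false`) and `v` has status bivalent (`none`), then `v` receives some
message from `u` before `v`'s phase-2 ack; consequently `u` is in `v`'s witness
set, `v` waits for `u`'s phase-2 message, sees `decided(0)`, and decides `0`. -/
theorem stmt13 {V : Type*}
    (recv1 recv2 : V → V → ℝ)  -- recvᵢ y x : time y receives x's phase-i message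
    (ack1 ack2 : V → ℝ)        -- phase-1 / phase-2 ack times
    (status : V → Option Bool) (decide : V → Bool)
    (u v : V) (huv : u ≠ v)
    (hu : status u = some false) (hv : status v = none)
    -- acknowledged broadcast: if v received no message from u by v's phase-2 ack,
    -- then u received v's phase-2 message before u's phase-1 ack
    (hkey : ∀ x y : V, x ≠ y →
      ¬ (recv1 y x < ack2 y ∨ recv2 y x < ack2 y) → recv2 x y < ack1 x)
    -- receiving a bivalent phase-2 message before one's phase-1 ack forces bivalent
    (hbiv : ∀ x : V, x ≠ u → status x = none → recv2 u x < ack1 u → status u = none)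
    -- decision rule: a bivalent node that has a witness with status decided(0)
    -- (heard from before its phase-2 ack) decides 0
    (hdecide : ∀ y : V, status y = none →
      (∃ x, (recv1 y x < ack2 y ∨ recv2 y x < ack2 y) ∧ status x = some false) →
      decide y = false) :
    (recv1 v u < ack2 v ∨ recv2 v u < ack2 v) ∧ decide v = false := by
  have hrecv : recv1 v u < ack2 v ∨ recv2 v u < ack2 v := by
    by_contra h
    have h1 := hkey u v huv h
    have h2 := hbiv v (Ne.symm huv) hv h1
    rw [hu] at h2
    exact Option.some_ne_none _ h2
  exact ⟨hrecv, hdecide v hv ⟨u, hrecv, hu⟩⟩
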